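/- Assume 1 − α ≤ R/c ≤ 1/(1−α) and b ≥ 0. Then for every x ∈ ℝ, sup_{z ≥ x} G^b(z) equals: −c·x if x < b − (√(R/(α·c)) − √((1−α)/α))²; (1/α)·(√R − √((1−α)·c))² − b·c if b − (√(R/(α·c)) − √((1−α)/α))² ≤ x < b − (1−α)/α + √((1−α)·R/(α²·c)); G^b(x) = −c·x + R·(x − b)/(1 − α + α·(x − b)) if b − (1−α)/α + √((1−α)·R/(α²·c)) ≤ x < b + 1; and R − c·x if x ≥ b + 1. -/

import Mathlib

/-- `G^b`, the expected-utility function under the static audit with the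
truncated-linear test with entrance value `b`. -/
noncomputable def Gb (α c R b : ℝ) : ℝ → ℝ := fun x =>
  if x < b then -c * x
  else if x < b + 1 then -c * x + R * (x - b) / (1 - α + α * (x - b))
  else R - c * x

/-- Difference identity for the middle branch. -/
lemma f_diff (α c R t1 t2 : ℝ) (hd1 : (1-α+α*t1) ≠ 0) (hd2 : (1-α+α*t2) ≠ 0) :
    (R * t2 / (1-α+α*t2) - c*t2) - (R * t1 / (1-α+α*t1) - c*t1)
      = (t2 - t1) * (R*(1-α) - c*((1-α+α*t1)*(1-α+α*t2)))
          / ((1-α+α*t1)*(1-α+α*t2)) := by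
  have k1 : R * t1 / (1-α+α*t1) * (1-α+α*t1) = R*t1 := div_mul_cancel₀ _ hd1
  have k2 : R * t2 / (1-α+α*t2) * (1-α+α*t2) = R*t2 := div_mul_cancel₀ _ hd2
  rw [eq_div_iff (mul_ne_zero hd1 hd2)]
  linear_combination (1-α+α*t1) * k2 - (1-α+α*t2) * k1

/-- Monotonicity of the middle-branch function. -/
lemma F_mono (α c R t1 t2 : ℝ) (hα0 : 0 < α) (hα1 : α < 1)
    (h1 : 0 ≤ t1) (h2 : 0 ≤ t2)
    (hnum : 0 ≤ (t2 - t1) * (R*(1-α) - c*((1-α+α*t1)*(1-α+α*t2)))) :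
    R*t1/(1-α+α*t1) - c*t1 ≤ R*t2/(1-α+α*t2) - c*t2 := by
  have hd1 : 0 < 1-α+α*t1 := by nlinarith
  have hd2 : 0 < 1-α+α*t2 := by nlinarith
  rw [← sub_nonneg, f_diff α c R t1 t2 hd1.ne' hd2.ne']
  exact div_nonneg hnum (by positivity)

lemma mul_nonneg_of_np_np (a b : ℝ) (ha : a ≤ 0) (hb : b ≤ 0) : 0 ≤ a * b := by
  nlinarith

lemma thresh_eq (α c R : ℝ) (hα0 : 0 < α) (hα1 : α < 1) (hc : 0 < c) (hR : 0 < R) :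
    (Real.sqrt (R/(α*c)) - Real.sqrt ((1-α)/α))^2
      = (Real.sqrt R - Real.sqrt ((1-α)*c))^2 / (α*c) := by
  have h1α : 0 < 1 - α := by linarith
  rw [show (1-α)/α = ((1-α)*c)/(α*c) by field_simp]
  rw [Real.sqrt_div hR.le, Real.sqrt_div (by positivity), ← sub_div, div_pow,
    Real.sq_sqrt (by positivity : (0:ℝ) ≤ α*c)]

lemma M_eq (α c R : ℝ) (hα0 : 0 < α) (hα1 : α < 1) (hc : 0 < c) (hR : 0 < R) :
    (1/α) * (Real.sqrt R - Real.sqrt ((1-α)*c))^2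
      = R * ((Real.sqrt ((1-α)*R/c) - (1-α))/α)
          / (1-α+α*((Real.sqrt ((1-α)*R/c) - (1-α))/α))
        - c * ((Real.sqrt ((1-α)*R/c) - (1-α))/α) := by
  have h1α : 0 < 1 - α := by linarith
  have hs2 : Real.sqrt ((1-α)*R/c) ^ 2 = (1-α)*R/c := Real.sq_sqrt (by positivity)
  have hs0 : 0 < Real.sqrt ((1-α)*R/c) := Real.sqrt_pos.2 (by positivity)
  have hp2 : Real.sqrt R ^ 2 = R := Real.sq_sqrt hR.le
  have hq2 : Real.sqrt ((1-α)*c) ^ 2 = (1-α)*c := Real.sq_sqrt (by positivity)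
  have hcs : c * Real.sqrt ((1-α)*R/c) = Real.sqrt R * Real.sqrt ((1-α)*c) := by
    rw [show c * Real.sqrt ((1-α)*R/c)
          = Real.sqrt ((c * Real.sqrt ((1-α)*R/c))^2) from
        (Real.sqrt_sq (by positivity)).symm,
      show (c * Real.sqrt ((1-α)*R/c))^2 = R * ((1-α)*c) by
        rw [mul_pow, hs2]; field_simp,
      Real.sqrt_mul hR.le]
  set s := Real.sqrt ((1-α)*R/c) with hsdef
  have hden : 1-α+α*((s - (1-α))/α) = s := by field_simp; ring
  rw [hden]
  set p := Real.sqrt R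
  set q := Real.sqrt ((1-α)*c)
  have hs2' : c * s ^ 2 = (1-α) * R := by rw [hs2]; field_simp
  field_simp
  linear_combination s*hp2 + s*hq2 + 2*s*hcs - hs2'

/-- Global bound: on `[b, ∞)` the function `G^b` is at most `M`. -/
lemma Gb_le_M (α c R b : ℝ) (hα0 : 0 < α) (hα1 : α < 1) (hc : 0 < c) (hR : 0 < R)
    (hlo : 1 - α ≤ R / c) (hhi : R / c ≤ 1 / (1 - α))
    (z : ℝ) (hz : b ≤ z) :
    Gb α c R b z ≤ (1/α) * (Real.sqrt R - Real.sqrt ((1-α)*c))^2 - b*c := by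
  have h1α : 0 < 1 - α := by linarith
  set s := Real.sqrt ((1-α)*R/c) with hsdef
  have hs2 : s ^ 2 = (1-α)*R/c := Real.sq_sqrt (by positivity)
  have hs0 : 0 < s := Real.sqrt_pos.2 (by positivity)
  have hs2' : c * s ^ 2 = (1-α) * R := by rw [hs2]; field_simp
  have hsge : 1 - α ≤ s := by
    rw [hsdef]
    refine (Real.le_sqrt h1α.le (by positivity)).2 ?_
    rw [le_div_iff₀ hc]
    rw [le_div_iff₀ hc] at hlo
    nlinarith
  have hsle : s ≤ 1 := by
    rw [hsdef]
    refine Real.sqrt_le_one.2 ?_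
    have h1 : R * (1-α) ≤ 1 * c := (div_le_div_iff₀ hc h1α).1 hhi
    rw [div_le_one hc]
    nlinarith
  set t := (s - (1-α))/α with htdef
  have ht0 : 0 ≤ t := div_nonneg (by linarith) hα0.le
  have ht1 : t ≤ 1 := by rw [htdef, div_le_one hα0]; linarith
  have hdstar : 1-α+α*t = s := by rw [htdef]; field_simp; ring
  have hMF : (1/α) * (Real.sqrt R - Real.sqrt ((1-α)*c))^2
      = R*t/(1-α+α*t) - c*t := by
    have := M_eq α c R hα0 hα1 hc hR
    rw [← hsdef, ← htdef] at this
    exact this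
  have hkey : ∀ u : ℝ, 0 ≤ u →
      R*u/(1-α+α*u) - c*u ≤ R*t/(1-α+α*t) - c*t := by
    intro u hu
    rcases le_total u t with h | h
    · apply F_mono α c R u t hα0 hα1 hu ht0
      have hmu : α*u ≤ α*t := mul_le_mul_of_nonneg_left h hα0.le
      have hdu : 1-α+α*u ≤ s := by rw [← hdstar]; linarith
      rw [hdstar]
      have h2 : c*((1-α+α*u)*s) ≤ c*(s*s) :=
        mul_le_mul_of_nonneg_left (mul_le_mul_of_nonneg_right hdu hs0.le) hc.le
      have h3 : c*(s*s) = (1-α)*R := by rw [← hs2']; ring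
      refine mul_nonneg (by linarith) (by linarith)
    · apply F_mono α c R u t hα0 hα1 hu ht0
      have hmu : α*t ≤ α*u := mul_le_mul_of_nonneg_left h hα0.le
      have hdu : s ≤ 1-α+α*u := by rw [← hdstar]; linarith
      rw [hdstar]
      have h2 : c*(s*s) ≤ c*((1-α+α*u)*s) :=
        mul_le_mul_of_nonneg_left (mul_le_mul_of_nonneg_right hdu hs0.le) hc.le
      have h3 : c*(s*s) = (1-α)*R := by rw [← hs2']; ring
      refine mul_nonneg_of_np_np _ _ (by linarith) (by linarith)
  rw [hMF]
  rcases lt_or_ge z (b+1) with hz1 | hz1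
  · have hGz : Gb α c R b z = -c*z + R*(z-b)/(1-α+α*(z-b)) := by
      simp only [Gb]
      rw [if_neg (not_lt.2 hz), if_pos hz1]
    rw [hGz]
    have h3 := hkey (z-b) (by linarith)
    have e1 : -c*z = -(c*(z-b)) - c*b := by ring
    linarith
  · have hGz : Gb α c R b z = R - c*z := by
      simp only [Gb]
      rw [if_neg (by linarith), if_neg (not_lt.2 hz1)]
    rw [hGz]
    have h1 := hkey 1 zero_le_one
    have e1 : R*1/(1-α+α*1) - c*1 = R - c := by
      rw [show (1:ℝ)-α+α*1 = 1 by ring]; ring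
    have hcz : c*(b+1) ≤ c*z := mul_le_mul_of_nonneg_left hz1 hc.le
    have e2 : c*(b+1) = c*b + c := by ring
    linarith

set_option maxHeartbeats 2000000 in
theorem sup_Gb_piecewise
    (α c R b : ℝ) (hα0 : 0 < α) (hα1 : α < 1) (hc : 0 < c) (hR : 0 < R)
    (hlo : 1 - α ≤ R / c) (hhi : R / c ≤ 1 / (1 - α)) (hb : 0 ≤ b) :
    ∀ x : ℝ,
      (x < b - (Real.sqrt (R / (α * c)) - Real.sqrt ((1 - α) / α)) ^ 2 →
        sSup (Gb α c R b '' {z | x ≤ z}) = -c * x) ∧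
      (b - (Real.sqrt (R / (α * c)) - Real.sqrt ((1 - α) / α)) ^ 2 ≤ x →
        x < b - (1 - α) / α + Real.sqrt ((1 - α) * R / (α ^ 2 * c)) →
        sSup (Gb α c R b '' {z | x ≤ z})
          = (1 / α) * (Real.sqrt R - Real.sqrt ((1 - α) * c)) ^ 2 - b * c) ∧
      (b - (1 - α) / α + Real.sqrt ((1 - α) * R / (α ^ 2 * c)) ≤ x → x < b + 1 →
        sSup (Gb α c R b '' {z | x ≤ z})
          = -c * x + R * (x - b) / (1 - α + α * (x - b))) ∧
      (b + 1 ≤ x → sSup (Gb α c R b '' {z | x ≤ z}) = R - c * x) := by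
  intro x
  have h1α : 0 < 1 - α := by linarith
  set s := Real.sqrt ((1-α)*R/c) with hsdef
  have hs2 : s ^ 2 = (1-α)*R/c := Real.sq_sqrt (by positivity)
  have hs0 : 0 < s := Real.sqrt_pos.2 (by positivity)
  have hs2' : c * s ^ 2 = (1-α) * R := by rw [hs2]; field_simp
  have hsge : 1 - α ≤ s := by
    rw [hsdef]
    refine (Real.le_sqrt h1α.le (by positivity)).2 ?_
    rw [le_div_iff₀ hc]
    rw [le_div_iff₀ hc] at hlo
    nlinarith
  have hsle : s ≤ 1 := by
    rw [hsdef]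
    refine Real.sqrt_le_one.2 ?_
    have h1 : R * (1-α) ≤ 1 * c := (div_le_div_iff₀ hc h1α).1 hhi
    rw [div_le_one hc]
    nlinarith
  set t := (s - (1-α))/α with htdef
  have ht0 : 0 ≤ t := div_nonneg (by linarith) hα0.le
  have ht1 : t ≤ 1 := by rw [htdef, div_le_one hα0]; linarith
  have hdstar : 1-α+α*t = s := by rw [htdef]; field_simp; ring
  -- the second threshold equals b + t
  have hsa : b - (1 - α) / α + Real.sqrt ((1 - α) * R / (α ^ 2 * c)) = b + t := by
    rw [show (1-α)*R/(α^2*c) = ((1-α)*R/c)/α^2 by ring,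
      Real.sqrt_div (by positivity), Real.sqrt_sq hα0.le, ← hsdef, htdef]
    ring
  -- the first threshold
  set p := Real.sqrt R with hpdef
  set q := Real.sqrt ((1-α)*c) with hqdef
  have hth : (Real.sqrt (R / (α * c)) - Real.sqrt ((1 - α) / α)) ^ 2
      = (p - q)^2 / (α*c) := thresh_eq α c R hα0 hα1 hc hR
  have hA0 : 0 ≤ (p - q)^2 := sq_nonneg _
  have hid : c * ((p-q)^2/(α*c)) = (1/α) * (p-q)^2 := by
    field_simp
  have hMF : (1/α) * (p - q)^2 = R*t/(1-α+α*t) - c*t := by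
    have := M_eq α c R hα0 hα1 hc hR
    rw [← hsdef, ← htdef, ← hpdef, ← hqdef] at this
    exact this
  have hbt : b ≤ b + t := by linarith
  -- value of Gb at b + t
  have hGw : Gb α c R b (b+t) = (1/α) * (p - q)^2 - b*c := by
    have hform : Gb α c R b (b+t) = -c*(b+t) + R*t/(1-α+α*t) := by
      rcases lt_or_ge (b+t) (b+1) with h | h
      · simp only [Gb]
        rw [if_neg (not_lt.2 hbt), if_pos h, add_sub_cancel_left]
      · have h1 : t = 1 := le_antisymm ht1 (by linarith)
        simp only [Gb]
        rw [if_neg (not_lt.2 hbt), if_neg (not_lt.2 h), h1,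
          show (1:ℝ)-α+α*1 = 1 by ring]
        ring
    rw [hform, hMF]
    ring
  refine ⟨?_, ?_, ?_, ?_⟩
  -- Case 1 : x < b - thresh²
  · intro hx
    rw [hth] at hx
    have hxb : x < b := by nlinarith [mul_pos hα0 hc]
    apply IsGreatest.csSup_eq
    constructor
    · refine ⟨x, le_refl x, ?_⟩
      simp only [Gb]; rw [if_pos hxb]
    · rintro w ⟨z, hz, rfl⟩
      simp only [Set.mem_setOf_eq] at hz
      rcases lt_or_ge z b with hzb | hzb
      · simp only [Gb]; rw [if_pos hzb]
        have := mul_le_mul_of_nonneg_left hz hc.le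
        linarith
      · have h1 := Gb_le_M α c R b hα0 hα1 hc hR hlo hhi z hzb
        rw [← hpdef, ← hqdef] at h1
        have h2 : c*x ≤ c*(b - (p-q)^2/(α*c)) := mul_le_mul_of_nonneg_left hx.le hc.le
        have e1 : c*(b - (p-q)^2/(α*c)) = c*b - c*((p-q)^2/(α*c)) := by ring
        linarith [hid]
  -- Case 2 : plateau
  · intro hx1 hx2
    rw [hth] at hx1
    rw [hsa] at hx2
    apply IsGreatest.csSup_eq
    constructor
    · exact ⟨b+t, by simpa using hx2.le, hGw⟩
    · rintro w ⟨z, hz, rfl⟩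
      simp only [Set.mem_setOf_eq] at hz
      rcases lt_or_ge z b with hzb | hzb
      · simp only [Gb]; rw [if_pos hzb]
        have h2 : c*(b - (p-q)^2/(α*c)) ≤ c*x := mul_le_mul_of_nonneg_left hx1 hc.le
        have h3 : c*x ≤ c*z := mul_le_mul_of_nonneg_left hz hc.le
        have e1 : c*(b - (p-q)^2/(α*c)) = c*b - c*((p-q)^2/(α*c)) := by ring
        linarith [hid]
      · have h1 := Gb_le_M α c R b hα0 hα1 hc hR hlo hhi z hzb
        rw [← hpdef, ← hqdef] at h1
        exact h1
  -- Case 3 : decreasing middle branch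
  · intro hx1 hx2
    rw [hsa] at hx1
    have hbx : b ≤ x := le_trans hbt hx1
    have hxt : t ≤ x - b := by linarith
    have hdx : s ≤ 1-α+α*(x-b) := by
      have := mul_le_mul_of_nonneg_left hxt hα0.le
      rw [← hdstar]; linarith
    apply IsGreatest.csSup_eq
    constructor
    · refine ⟨x, le_refl x, ?_⟩
      simp only [Gb]; rw [if_neg (not_lt.2 hbx), if_pos hx2]
    · rintro w ⟨z, hz, rfl⟩
      simp only [Set.mem_setOf_eq] at hz
      have hbz : b ≤ z := le_trans hbx hz
      rcases lt_or_ge z (b+1) with hz1 | hz1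
      · simp only [Gb]; rw [if_neg (not_lt.2 hbz), if_pos hz1]
        have hdz : 1-α+α*(x-b) ≤ 1-α+α*(z-b) := by
          have := mul_le_mul_of_nonneg_left (by linarith : x - b ≤ z - b) hα0.le
          linarith
        have hdx0 : 0 ≤ 1-α+α*(x-b) := by linarith
        have hprod : s*s ≤ (1-α+α*(z-b))*(1-α+α*(x-b)) :=
          mul_le_mul (by linarith) hdx hs0.le (by linarith)
        have hprod' : c*(s*s) ≤ c*((1-α+α*(z-b))*(1-α+α*(x-b))) :=
          mul_le_mul_of_nonneg_left hprod hc.le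
        have h3 : c*(s*s) = (1-α)*R := by rw [← hs2']; ring
        have hmono := F_mono α c R (z-b) (x-b) hα0 hα1 (by linarith) (by linarith)
          (mul_nonneg_of_np_np _ _ (by linarith) (by linarith))
        have e1 : -c*z = -(c*(z-b)) - c*b := by ring
        have e2 : -c*x = -(c*(x-b)) - c*b := by ring
        linarith
      · simp only [Gb]; rw [if_neg (by linarith), if_neg (not_lt.2 hz1)]
        have hd1 : s ≤ 1-α+α*1 := by linarith
        have hprod : s*s ≤ (1-α+α*1)*(1-α+α*(x-b)) :=
          mul_le_mul hd1 hdx hs0.le (by linarith)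
        have hprod' : c*(s*s) ≤ c*((1-α+α*1)*(1-α+α*(x-b))) :=
          mul_le_mul_of_nonneg_left hprod hc.le
        have h3 : c*(s*s) = (1-α)*R := by rw [← hs2']; ring
        have hmono := F_mono α c R 1 (x-b) hα0 hα1 zero_le_one (by linarith)
          (mul_nonneg_of_np_np _ _ (by linarith) (by linarith))
        have e1 : R*1/(1-α+α*1) - c*1 = R - c := by
          rw [show (1:ℝ)-α+α*1 = 1 by ring]; ring
        have hcz : c*(b+1) ≤ c*z := mul_le_mul_of_nonneg_left hz1 hc.le
        have e2 : c*(b+1) = c*b + c := by ring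
        have e3 : -c*x = -(c*(x-b)) - c*b := by ring
        linarith
  -- Case 4 : right tail
  · intro hx
    apply IsGreatest.csSup_eq
    constructor
    · refine ⟨x, le_refl x, ?_⟩
      simp only [Gb]; rw [if_neg (by linarith), if_neg (not_lt.2 hx)]
    · rintro w ⟨z, hz, rfl⟩
      simp only [Set.mem_setOf_eq] at hz
      simp only [Gb]; rw [if_neg (by linarith), if_neg (by linarith)]
      have := mul_le_mul_of_nonneg_left hz hc.le
      linarith
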